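/- The group SL_∞(ℤ), defined as the union (direct limit) of the chain SL₂(ℤ) ⊂ SL₃(ℤ) ⊂ ⋯ under the upper-left corner embeddings, has no nontrivial finite quotients: every homomorphism from SL_∞(ℤ) to a finite group is trivial. -/

import Mathlib

/-- The shear endomorphism `v ↦ v + v(j) • e_i` of `ℤ^{⊕ℕ}`, i.e. the elementary matrix
`E_{ij}(1) = I + e_{ij}`. -/
noncomputable def shear (i j : ℕ) : Module.End ℤ (ℕ →₀ ℤ) :=
  1 + (Finsupp.lsingle i).comp (Finsupp.lapply j)

theorem shear_mul_aux {i j : ℕ} (h : i ≠ j) :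
    ((Finsupp.lsingle i).comp (Finsupp.lapply j) : Module.End ℤ (ℕ →₀ ℤ)) *
      (Finsupp.lsingle i).comp (Finsupp.lapply j) = 0 := by
  ext v
  simp only [Module.End.mul_apply, LinearMap.comp_apply, Finsupp.lapply_apply,
    Finsupp.lsingle_apply, Finsupp.single_apply, LinearMap.zero_apply]
  simp [h]

/-- The elementary matrix `E_{ij}(1)` as an invertible element (its inverse is `E_{ij}(-1)`). -/
noncomputable def elemUnit (i j : ℕ) (h : i ≠ j) : (Module.End ℤ (ℕ →₀ ℤ))ˣ where
  val := shear i j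
  inv := 1 - (Finsupp.lsingle i).comp (Finsupp.lapply j)
  val_inv := by
    simp only [shear, add_mul, mul_sub, mul_one, one_mul, shear_mul_aux h]
    abel
  inv_val := by
    simp only [shear, sub_mul, mul_add, mul_one, one_mul, shear_mul_aux h]
    abel

/-- `SL_∞(ℤ)`: the group generated by all elementary matrices `E_{ij}(1)`, `i ≠ j`.  Since
each `SL_n(ℤ)` is generated by its elementary matrices, this is the union (direct limit) of
the chain `SL₂(ℤ) ⊂ SL₃(ℤ) ⊂ ⋯` inside the endomorphisms of `ℤ^{⊕ℕ}`. -/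
noncomputable def SLinf : Subgroup (Module.End ℤ (ℕ →₀ ℤ))ˣ :=
  Subgroup.closure {u | ∃ (i j : ℕ) (h : i ≠ j), u = elemUnit i j h}

namespace SLinfNFQ

noncomputable def LL (i j : ℕ) : Module.End ℤ (ℕ →₀ ℤ) :=
  (Finsupp.lsingle i).comp (Finsupp.lapply j)

lemma LL_apply (i j : ℕ) (v : ℕ →₀ ℤ) : LL i j v = Finsupp.single i (v j) := rfl

lemma LL_mul_mid (e : Module.End ℤ (ℕ →₀ ℤ)) (i j k l : ℕ) :
    LL i j * e * LL k l = ((e (Finsupp.single k 1)) j) • LL i l := by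
  apply LinearMap.ext; intro v
  have h1 : Finsupp.single k (v l) = (v l) • Finsupp.single k (1:ℤ) := by
    rw [Finsupp.smul_single', mul_one]
  calc (LL i j * e * LL k l) v = LL i j (e (Finsupp.single k (v l))) := rfl
    _ = LL i j ((v l) • e (Finsupp.single k 1)) := by rw [h1, map_smul]
    _ = Finsupp.single i ((v l) * (e (Finsupp.single k 1)) j) := by
          rw [LL_apply, Finsupp.smul_apply, smul_eq_mul]
    _ = (((e (Finsupp.single k 1)) j) • LL i l) v := by
          rw [LinearMap.smul_apply, LL_apply, Finsupp.smul_single', mul_comm]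

lemma LL_mul (i j k l : ℕ) :
    LL i j * LL k l = ((Finsupp.single k (1:ℤ)) j) • LL i l := by
  have := LL_mul_mid 1 i j k l
  simpa using this

lemma LL_mul_of_ne (i j k l : ℕ) (h : j ≠ k) : LL i j * LL k l = 0 := by
  rw [LL_mul, Finsupp.single_apply, if_neg (fun hh => h hh.symm), zero_smul]

lemma LL_mul_same (i j l : ℕ) : LL i j * LL j l = LL i l := by
  rw [LL_mul, Finsupp.single_apply, if_pos rfl, one_smul]

lemma mul_LL (e : Module.End ℤ (ℕ →₀ ℤ)) (n j : ℕ)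
    (he : e (Finsupp.single n 1) = Finsupp.single n (1:ℤ)) :
    e * LL n j = LL n j := by
  apply LinearMap.ext; intro v
  calc (e * LL n j) v = e (Finsupp.single n (v j)) := rfl
    _ = e ((v j) • Finsupp.single n 1) := by rw [Finsupp.smul_single', mul_one]
    _ = (v j) • Finsupp.single n (1:ℤ) := by rw [map_smul, he]
    _ = LL n j v := by rw [LL_apply, Finsupp.smul_single', mul_one]

lemma LL_apply_single (i j n : ℕ) (c : ℤ) :
    LL i j (Finsupp.single n c) = if n = j then Finsupp.single i c else 0 := by
  rw [LL_apply, Finsupp.single_apply]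
  split <;> simp

/-- The elementary unit `E_{ij}(a) = I + a e_{ij}`. -/
noncomputable def Eu (i j : ℕ) (h : i ≠ j) (a : ℤ) : (Module.End ℤ (ℕ →₀ ℤ))ˣ where
  val := 1 + a • LL i j
  inv := 1 - a • LL i j
  val_inv := by
    have h0 : LL i j * LL i j = 0 := LL_mul_of_ne i j i j (Ne.symm h)
    have hx : (a • LL i j) * (a • LL i j) = 0 := by
      rw [smul_mul_assoc, mul_smul_comm, h0, smul_zero, smul_zero]
    rw [mul_sub, mul_one, add_mul, one_mul, hx]
    abel
  inv_val := by
    have h0 : LL i j * LL i j = 0 := LL_mul_of_ne i j i j (Ne.symm h)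
    have hx : (a • LL i j) * (a • LL i j) = 0 := by
      rw [smul_mul_assoc, mul_smul_comm, h0, smul_zero, smul_zero]
    rw [mul_add, mul_one, sub_mul, one_mul, hx]
    abel

@[simp] lemma Eu_val (i j : ℕ) (h : i ≠ j) (a : ℤ) :
    ((Eu i j h a : (Module.End ℤ (ℕ →₀ ℤ))ˣ) : Module.End ℤ (ℕ →₀ ℤ)) = 1 + a • LL i j := rfl

@[simp] lemma Eu_inv_val (i j : ℕ) (h : i ≠ j) (a : ℤ) :
    (((Eu i j h a)⁻¹ : (Module.End ℤ (ℕ →₀ ℤ))ˣ) : Module.End ℤ (ℕ →₀ ℤ)) = 1 - a • LL i j := rfl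

lemma Eu_zero (i j : ℕ) (h : i ≠ j) : Eu i j h 0 = 1 := by
  apply Units.ext; simp

lemma Eu_add (i j : ℕ) (h : i ≠ j) (a b : ℤ) :
    Eu i j h a * Eu i j h b = Eu i j h (a + b) := by
  apply Units.ext
  have h0 : LL i j * LL i j = 0 := LL_mul_of_ne i j i j (Ne.symm h)
  show (1 + a • LL i j) * (1 + b • LL i j) = 1 + (a + b) • LL i j
  simp only [mul_add, add_mul, mul_one, one_mul, smul_mul_assoc, mul_smul_comm, h0,
    smul_zero, add_smul]
  abel

lemma Eu_neg (i j : ℕ) (h : i ≠ j) (a : ℤ) : Eu i j h (-a) = (Eu i j h a)⁻¹ := by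
  apply Units.ext
  show (1 : Module.End ℤ (ℕ →₀ ℤ)) + (-a) • LL i j = 1 - a • LL i j
  rw [neg_smul, sub_eq_add_neg]

lemma Eu_one_eq (i j : ℕ) (h : i ≠ j) : Eu i j h 1 = elemUnit i j h := by
  apply Units.ext
  show (1 : Module.End ℤ (ℕ →₀ ℤ)) + (1:ℤ) • LL i j = shear i j
  rw [one_smul]; rfl

lemma Eu_mem (i j : ℕ) (h : i ≠ j) (a : ℤ) : Eu i j h a ∈ SLinf := by
  have h1 : Eu i j h 1 ∈ SLinf := by
    rw [Eu_one_eq]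
    exact Subgroup.subset_closure ⟨i, j, h, rfl⟩
  induction a using Int.induction_on with
  | zero => rw [Eu_zero]; exact one_mem _
  | succ n ih => rw [← Eu_add]; exact mul_mem ih h1
  | pred n ih =>
      have : Eu i j h (-(n:ℤ) - 1) = Eu i j h (-n) * Eu i j h (-1) := by
        rw [Eu_add]; ring_nf
      have h2 : Eu i j h (-1) ∈ SLinf := by rw [Eu_neg]; exact inv_mem h1
      rw [this]
      exact mul_mem ih h2


/-- Steinberg commutator relation: `[E_{ij}(a), E_{jk}(b)] = E_{ik}(ab)`. -/
lemma Eu_comm (i j k : ℕ) (hij : i ≠ j) (hjk : j ≠ k) (hik : i ≠ k) (a b : ℤ) :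
    Eu i j hij a * Eu j k hjk b * (Eu i j hij a)⁻¹ * (Eu j k hjk b)⁻¹ =
      Eu i k hik (a * b) := by
  apply Units.ext
  show (1 + a • LL i j) * (1 + b • LL j k) * (1 - a • LL i j) * (1 - b • LL j k)
      = 1 + (a * b) • LL i k
  have h1 : LL i j * LL j k = LL i k := LL_mul_same _ _ _
  have h2 : LL j k * LL i j = 0 := LL_mul_of_ne _ _ _ _ (Ne.symm hik)
  have h3 : LL i j * LL i j = 0 := LL_mul_of_ne _ _ _ _ (Ne.symm hij)
  have h4 : LL j k * LL j k = 0 := LL_mul_of_ne _ _ _ _ (Ne.symm hjk)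
  have h5 : LL i k * LL i j = 0 := LL_mul_of_ne _ _ _ _ (Ne.symm hik)
  have h6 : LL i k * LL j k = 0 := LL_mul_of_ne _ _ _ _ (Ne.symm hjk)
  have s1 : (1 + a • LL i j) * (1 + b • LL j k)
      = 1 + a • LL i j + b • LL j k + (a * b) • LL i k := by
    rw [mul_add, mul_one, add_mul, one_mul, smul_mul_assoc, mul_smul_comm, h1, smul_smul]
    abel
  have s2 : (1 + a • LL i j + b • LL j k + (a * b) • LL i k) * (1 - a • LL i j)
      = 1 + b • LL j k + (a * b) • LL i k := by
    rw [mul_sub, mul_one]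
    rw [add_mul, add_mul, add_mul, one_mul]
    rw [smul_mul_assoc, mul_smul_comm, h3, smul_zero, smul_zero]
    rw [smul_mul_assoc, mul_smul_comm, h2, smul_zero, smul_zero]
    rw [smul_mul_assoc, mul_smul_comm, h5, smul_zero, smul_zero]
    abel
  have s3 : (1 + b • LL j k + (a * b) • LL i k) * (1 - b • LL j k)
      = 1 + (a * b) • LL i k := by
    rw [mul_sub, mul_one]
    rw [add_mul, add_mul, one_mul]
    rw [smul_mul_assoc, mul_smul_comm, h4, smul_zero, smul_zero]
    rw [smul_mul_assoc, mul_smul_comm, h6, smul_zero, smul_zero]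
    abel
  rw [s1, s2, s3]


/-- Extraction: if `u` and `u⁻¹` fix `e_n`, then the double commutator
`[[u, E_{nj}(1)], E_{lq}(1)]` equals `E_{nq}(c)` where `c` is the `(j,l)` entry of `u⁻¹ - 1`. -/
lemma extract (u : (Module.End ℤ (ℕ →₀ ℤ))ˣ) (n j l q : ℕ)
    (hnj : n ≠ j) (hlq : l ≠ q) (hnq : n ≠ q)
    (hA : ((u : (Module.End ℤ (ℕ →₀ ℤ))ˣ) : Module.End ℤ (ℕ →₀ ℤ)) (Finsupp.single n 1)
        = Finsupp.single n 1)
    (hB : ((↑u⁻¹ : Module.End ℤ (ℕ →₀ ℤ))) (Finsupp.single n 1) = Finsupp.single n 1) :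
    (u * Eu n j hnj 1 * u⁻¹ * (Eu n j hnj 1)⁻¹) * Eu l q hlq 1 *
        (u * Eu n j hnj 1 * u⁻¹ * (Eu n j hnj 1)⁻¹)⁻¹ * (Eu l q hlq 1)⁻¹ =
      Eu n q hnq (((↑u⁻¹ : Module.End ℤ (ℕ →₀ ℤ)) (Finsupp.single l 1)) j
        - ((Finsupp.single l (1:ℤ)) j)) := by
  set A : Module.End ℤ (ℕ →₀ ℤ) := ((u : (Module.End ℤ (ℕ →₀ ℤ))ˣ) : Module.End ℤ (ℕ →₀ ℤ))
    with hAdef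
  set B : Module.End ℤ (ℕ →₀ ℤ) := (↑u⁻¹ : Module.End ℤ (ℕ →₀ ℤ)) with hBdef
  have hAL : A * LL n j = LL n j := mul_LL _ _ _ hA
  have hBL : B * LL n j = LL n j := mul_LL _ _ _ hB
  have hAB : A * B = 1 := u.mul_inv
  have hLL0 : LL n j * LL n j = 0 := LL_mul_of_ne _ _ _ _ (Ne.symm hnj)
  set σ : Module.End ℤ (ℕ →₀ ℤ) := LL n j * B - LL n j with hσ
  -- (L n j * B) * L n j = 0
  have key : (LL n j * B) * LL n j = 0 := by rw [mul_assoc, hBL, hLL0]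
  have hss : σ * σ = 0 := by
    rw [hσ, sub_mul, mul_sub, mul_sub]
    rw [← mul_assoc (LL n j * B) (LL n j) B, key, zero_mul]
    rw [← mul_assoc (LL n j) (LL n j) B, hLL0, zero_mul]
    simp
  -- the inner commutator is `1 + σ`
  have hWval : ((u * Eu n j hnj 1 * u⁻¹ * (Eu n j hnj 1)⁻¹ :
      (Module.End ℤ (ℕ →₀ ℤ))ˣ) : Module.End ℤ (ℕ →₀ ℤ)) = 1 + σ := by
    have : ((u * Eu n j hnj 1 * u⁻¹ * (Eu n j hnj 1)⁻¹ :
        (Module.End ℤ (ℕ →₀ ℤ))ˣ) : Module.End ℤ (ℕ →₀ ℤ))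
        = A * (1 + (1:ℤ) • LL n j) * B * (1 - (1:ℤ) • LL n j) := by
      simp [Units.val_mul]
      rfl
    rw [this, one_smul]
    rw [mul_add, mul_one, hAL, add_mul, hAB, mul_sub, mul_one, add_mul]
    rw [key, hσ]
    abel
  let W : (Module.End ℤ (ℕ →₀ ℤ))ˣ :=
    ⟨1 + σ, 1 - σ,
      by rw [mul_sub, mul_one, add_mul, one_mul, hss]; abel,
      by rw [mul_add, mul_one, sub_mul, one_mul, hss]; abel⟩
  have hW : u * Eu n j hnj 1 * u⁻¹ * (Eu n j hnj 1)⁻¹ = W := Units.ext hWval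
  rw [hW]
  apply Units.ext
  set c : ℤ := (B (Finsupp.single l 1)) j - ((Finsupp.single l (1:ℤ)) j) with hc
  show (1 + σ) * (1 + (1:ℤ) • LL l q) * (1 - σ) * (1 - (1:ℤ) • LL l q)
      = 1 + c • LL n q
  rw [one_smul]
  have f1 : σ * LL l q = c • LL n q := by
    rw [hσ, sub_mul, LL_mul_mid, LL_mul, hc, sub_smul]
  have f2 : LL l q * σ = 0 := by
    rw [hσ, mul_sub, ← mul_assoc, LL_mul_of_ne _ _ _ _ (Ne.symm hnq)]
    simp
  have f3 : LL n q * σ = 0 := by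
    rw [hσ, mul_sub, ← mul_assoc, LL_mul_of_ne _ _ _ _ (Ne.symm hnq)]
    simp
  have f4 : LL l q * LL l q = 0 := LL_mul_of_ne _ _ _ _ (Ne.symm hlq)
  have f5 : LL n q * LL l q = 0 := LL_mul_of_ne _ _ _ _ (Ne.symm hlq)
  have s1 : (1 + σ) * (1 + LL l q) = 1 + σ + LL l q + c • LL n q := by
    rw [mul_add, mul_one, add_mul, one_mul, f1]
    abel
  have s2 : (1 + σ + LL l q + c • LL n q) * (1 - σ) = 1 + LL l q + c • LL n q := by
    rw [mul_sub, mul_one, add_mul, add_mul, add_mul, one_mul, hss, f2,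
      smul_mul_assoc, f3, smul_zero]
    abel
  have s3 : (1 + LL l q + c • LL n q) * (1 - LL l q) = 1 + c • LL n q := by
    rw [mul_sub, mul_one, add_mul, add_mul, one_mul, f4,
      smul_mul_assoc, f5, smul_zero]
    abel
  rw [s1, s2, s3]


/-- The elementary unit as an element of `SLinf`. -/
noncomputable def gf (i j : ℕ) (h : i ≠ j) (a : ℤ) : SLinf := ⟨Eu i j h a, Eu_mem i j h a⟩

@[simp] lemma gf_coe (i j : ℕ) (h : i ≠ j) (a : ℤ) :
    ((gf i j h a : SLinf) : (Module.End ℤ (ℕ →₀ ℤ))ˣ) = Eu i j h a := rfl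

lemma mv_right {K : Subgroup SLinf} [hN : K.Normal] {i j : ℕ} {hij : i ≠ j} {a : ℤ}
    (h : gf i j hij a ∈ K) {k : ℕ} (hjk : j ≠ k) (hik : i ≠ k) : gf i k hik a ∈ K := by
  have hid : gf i k hik a =
      gf i j hij a * gf j k hjk 1 * (gf i j hij a)⁻¹ * (gf j k hjk 1)⁻¹ := by
    apply Subtype.ext
    push_cast
    simp only [gf_coe]
    rw [Eu_comm i j k hij hjk hik a 1, mul_one]
  rw [hid]
  have h2 : gf i j hij a * (gf j k hjk 1 * (gf i j hij a)⁻¹ * (gf j k hjk 1)⁻¹) ∈ K :=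
    mul_mem h (hN.conj_mem _ (inv_mem h) _)
  simpa [mul_assoc] using h2

lemma mv_left {K : Subgroup SLinf} [hN : K.Normal] {i j : ℕ} {hij : i ≠ j} {a : ℤ}
    (h : gf i j hij a ∈ K) {k : ℕ} (hki : k ≠ i) (hkj : k ≠ j) : gf k j hkj a ∈ K := by
  have hid : gf k j hkj a =
      gf k i hki 1 * gf i j hij a * (gf k i hki 1)⁻¹ * (gf i j hij a)⁻¹ := by
    apply Subtype.ext
    push_cast
    simp only [gf_coe]
    rw [Eu_comm k i j hki hij hkj 1 a, one_mul]
  rw [hid]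
  have h2 : (gf k i hki 1 * gf i j hij a * (gf k i hki 1)⁻¹) * (gf i j hij a)⁻¹ ∈ K :=
    mul_mem (hN.conj_mem _ h _) (inv_mem h)
  simpa [mul_assoc] using h2

lemma reach {K : Subgroup SLinf} [K.Normal] {n q : ℕ} {hnq : n ≠ q}
    (h : gf n q hnq 1 ∈ K) : ∀ i j (hij : i ≠ j), gf i j hij 1 ∈ K := by
  intro i j hij
  have hnt : n ≠ n + q + i + j + 1 := by omega
  have hqt : q ≠ n + q + i + j + 1 := by omega
  have hit : i ≠ n + q + i + j + 1 := by omega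
  have hjt : j ≠ n + q + i + j + 1 := by omega
  have h1 : gf n (n + q + i + j + 1) hnt 1 ∈ K := mv_right h hqt hnt
  by_cases hin : i = n
  · subst hin
    exact mv_right h1 (Ne.symm hjt) hij
  · have h2 : gf i (n + q + i + j + 1) hit 1 ∈ K := mv_left h1 hin hit
    exact mv_right h2 (Ne.symm hjt) hij


lemma Eu_apply_single_ne (i j : ℕ) (h : i ≠ j) (a : ℤ) (m : ℕ) (c : ℤ) (hm : m ≠ j) :
    ((Eu i j h a : (Module.End ℤ (ℕ →₀ ℤ))ˣ) : Module.End ℤ (ℕ →₀ ℤ)) (Finsupp.single m c)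
      = Finsupp.single m c := by
  rw [Eu_val, LinearMap.add_apply, Module.End.one_apply, LinearMap.smul_apply,
    LL_apply_single, if_neg hm, smul_zero, add_zero]

lemma Eu_inv_apply_single_ne (i j : ℕ) (h : i ≠ j) (a : ℤ) (m : ℕ) (c : ℤ) (hm : m ≠ j) :
    (((Eu i j h a)⁻¹ : (Module.End ℤ (ℕ →₀ ℤ))ˣ) : Module.End ℤ (ℕ →₀ ℤ)) (Finsupp.single m c)
      = Finsupp.single m c := by
  rw [Eu_inv_val, LinearMap.sub_apply, Module.End.one_apply, LinearMap.smul_apply,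
    LL_apply_single, if_neg hm, smul_zero, sub_zero]

lemma Eu_apply_single_self (i j : ℕ) (h : i ≠ j) (a : ℤ) (c : ℤ) :
    ((Eu i j h a : (Module.End ℤ (ℕ →₀ ℤ))ˣ) : Module.End ℤ (ℕ →₀ ℤ)) (Finsupp.single j c)
      = Finsupp.single j c + a • Finsupp.single i c := by
  rw [Eu_val, LinearMap.add_apply, Module.End.one_apply, LinearMap.smul_apply,
    LL_apply_single, if_pos rfl]

end SLinfNFQ

/-- `SL_∞(ℤ)` has no nontrivial finite quotients: every homomorphism to a finite group is
trivial. -/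
theorem slinf_no_finite_quotients (H : Type) [Group H] [Finite H] (f : SLinf →* H) :
    ∀ g, f g = 1 := by
  classical
  have hw : ∀ m : ℕ, (2*m) ≠ (2*m+1) := fun m => by omega
  obtain ⟨k, k', hkk, heq⟩ := Finite.exists_ne_map_eq_of_infinite
    (fun m : ℕ => f (SLinfNFQ.gf (2*m) (2*m+1) (hw m) 1))

  set g0 : SLinf := SLinfNFQ.gf (2*k) (2*k+1) (hw k) 1 *
      (SLinfNFQ.gf (2*k') (2*k'+1) (hw k') 1)⁻¹ with hg0def
  have hg0 : g0 ∈ f.ker := by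
    rw [MonoidHom.mem_ker, hg0def, map_mul, map_inv, heq]
    simp
  have hnjj : 2*k+2*k'+2 ≠ 2*k' := by omega
  have hllqq : 2*k'+1 ≠ 2*k+2*k'+3 := by omega
  have hnqq : 2*k+2*k'+2 ≠ 2*k+2*k'+3 := by omega
  have hcoe : ((g0 : SLinf) : (Module.End ℤ (ℕ →₀ ℤ))ˣ)
      = SLinfNFQ.Eu (2*k) (2*k+1) (hw k) 1 * (SLinfNFQ.Eu (2*k') (2*k'+1) (hw k') 1)⁻¹ := by
    rw [hg0def]
    push_cast
    simp only [SLinfNFQ.gf_coe]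
  have hcoeInv : (((g0 : SLinf) : (Module.End ℤ (ℕ →₀ ℤ))ˣ))⁻¹
      = SLinfNFQ.Eu (2*k') (2*k'+1) (hw k') 1 * (SLinfNFQ.Eu (2*k) (2*k+1) (hw k) 1)⁻¹ := by
    rw [hcoe, mul_inv_rev, inv_inv]
  have hA : ((((g0 : SLinf) : (Module.End ℤ (ℕ →₀ ℤ))ˣ)) : Module.End ℤ (ℕ →₀ ℤ))
      (Finsupp.single (2*k+2*k'+2) 1) = Finsupp.single (2*k+2*k'+2) 1 := by
    rw [hcoe, Units.val_mul, Module.End.mul_apply,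
      SLinfNFQ.Eu_inv_apply_single_ne _ _ _ _ _ _ (by omega : 2*k+2*k'+2 ≠ 2*k'+1),
      SLinfNFQ.Eu_apply_single_ne _ _ _ _ _ _ (by omega : 2*k+2*k'+2 ≠ 2*k+1)]
  have hB : ((↑(((g0 : SLinf) : (Module.End ℤ (ℕ →₀ ℤ))ˣ))⁻¹ : Module.End ℤ (ℕ →₀ ℤ)))
      (Finsupp.single (2*k+2*k'+2) 1) = Finsupp.single (2*k+2*k'+2) 1 := by
    rw [hcoeInv, Units.val_mul, Module.End.mul_apply,
      SLinfNFQ.Eu_inv_apply_single_ne _ _ _ _ _ _ (by omega : 2*k+2*k'+2 ≠ 2*k+1),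
      SLinfNFQ.Eu_apply_single_ne _ _ _ _ _ _ (by omega : 2*k+2*k'+2 ≠ 2*k'+1)]
  -- the extracted entry equals 1
  have hcval : ((↑(((g0 : SLinf) : (Module.End ℤ (ℕ →₀ ℤ))ˣ))⁻¹ : Module.End ℤ (ℕ →₀ ℤ))
        (Finsupp.single (2*k'+1) 1)) (2*k')
      - ((Finsupp.single (2*k'+1) (1:ℤ)) (2*k')) = 1 := by
    rw [hcoeInv, Units.val_mul, Module.End.mul_apply,
      SLinfNFQ.Eu_inv_apply_single_ne _ _ _ _ _ _ (by omega : 2*k'+1 ≠ 2*k+1),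
      SLinfNFQ.Eu_apply_single_self]
    rw [Finsupp.add_apply, Finsupp.smul_apply]
    rw [Finsupp.single_apply, Finsupp.single_apply, if_neg (by omega : ¬ (2*k'+1 = 2*k')),
      if_pos rfl]
    simp
  -- extraction
  have hx := SLinfNFQ.extract ((g0 : SLinf) : (Module.End ℤ (ℕ →₀ ℤ))ˣ)
    (2*k+2*k'+2) (2*k') (2*k'+1) (2*k+2*k'+3) hnjj hllqq hnqq hA hB
  -- kernel memberships
  have h1mem : g0 * SLinfNFQ.gf (2*k+2*k'+2) (2*k') hnjj 1 * g0⁻¹ *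
      (SLinfNFQ.gf (2*k+2*k'+2) (2*k') hnjj 1)⁻¹ ∈ f.ker := by
    have hc := (MonoidHom.normal_ker f).conj_mem _ (inv_mem hg0)
      (SLinfNFQ.gf (2*k+2*k'+2) (2*k') hnjj 1)
    have h2 := mul_mem hg0 hc
    simpa [mul_assoc] using h2
  set w1 : SLinf := g0 * SLinfNFQ.gf (2*k+2*k'+2) (2*k') hnjj 1 * g0⁻¹ *
      (SLinfNFQ.gf (2*k+2*k'+2) (2*k') hnjj 1)⁻¹ with hw1def
  have hzmem : w1 * SLinfNFQ.gf (2*k'+1) (2*k+2*k'+3) hllqq 1 * w1⁻¹ *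
      (SLinfNFQ.gf (2*k'+1) (2*k+2*k'+3) hllqq 1)⁻¹ ∈ f.ker := by
    have hc := (MonoidHom.normal_ker f).conj_mem _ (inv_mem h1mem)
      (SLinfNFQ.gf (2*k'+1) (2*k+2*k'+3) hllqq 1)
    have h2 := mul_mem h1mem hc
    simpa [mul_assoc] using h2
  have hz : w1 * SLinfNFQ.gf (2*k'+1) (2*k+2*k'+3) hllqq 1 * w1⁻¹ *
      (SLinfNFQ.gf (2*k'+1) (2*k+2*k'+3) hllqq 1)⁻¹
      = SLinfNFQ.gf (2*k+2*k'+2) (2*k+2*k'+3) hnqq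
          (((↑(((g0 : SLinf) : (Module.End ℤ (ℕ →₀ ℤ))ˣ))⁻¹ : Module.End ℤ (ℕ →₀ ℤ))
            (Finsupp.single (2*k'+1) 1)) (2*k')
          - ((Finsupp.single (2*k'+1) (1:ℤ)) (2*k'))) := by
    apply Subtype.ext
    rw [hw1def]
    push_cast
    simp only [SLinfNFQ.gf_coe]
    exact hx
  have hker1 : SLinfNFQ.gf (2*k+2*k'+2) (2*k+2*k'+3) hnqq 1 ∈ f.ker := by
    have hm := hz ▸ hzmem
    rwa [congrArg (SLinfNFQ.gf (2*k+2*k'+2) (2*k+2*k'+3) hnqq) hcval] at hm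
  have hall : ∀ i j (hij : i ≠ j), SLinfNFQ.gf i j hij 1 ∈ f.ker :=
    SLinfNFQ.reach hker1
  -- conclusion by closure induction
  intro g
  obtain ⟨x, hx'⟩ := g
  induction hx' using Subgroup.closure_induction with
  | mem y hy =>
      obtain ⟨i, j, hij, rfl⟩ := hy
      have hm := hall i j hij
      rw [MonoidHom.mem_ker] at hm
      convert hm using 2
      apply Subtype.ext
      rw [SLinfNFQ.gf_coe, SLinfNFQ.Eu_one_eq]
  | one => exact map_one f
  | mul x y hx hy ihx ihy =>
      have hxy : (⟨x * y, mul_mem hx hy⟩ : SLinf) = ⟨x, hx⟩ * ⟨y, hy⟩ := rfl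
      rw [hxy, map_mul, ihx, ihy, mul_one]
  | inv x hx ihx =>
      have hxi : (⟨x⁻¹, inv_mem hx⟩ : SLinf) = (⟨x, hx⟩ : SLinf)⁻¹ := rfl
      rw [hxi, map_inv, ihx, inv_one]
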